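/- Let k be a field of characteristic zero, n ≥ 3, R_n = k[x_1,...,x_n], d_n = (1 - x_1 x_2^α)∂_{x_1} + x_1^m ∂_{x_2} + x_2 ∂_{x_3} + ... + x_{n-1} ∂_{x_n} with m ≥ 2, α ≥ 1. If ρ is a k-algebra automorphism of R_n commuting with d_n, then ρ(x_1) = x_1 and ρ(x_2) = x_2. -/

import Mathlib

open MvPolynomial

open Finset

noncomputable section
namespace Stmt12Aux

variable {k : Type*} [Field k] {n : ℕ}

lemma pderiv_comm' (i j : Fin n) (f : MvPolynomial (Fin n) k) :
    pderiv i (pderiv j f) = pderiv j (pderiv i f) := by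
  induction f using MvPolynomial.induction_on' with
  | monomial s a =>
    rcases eq_or_ne i j with rfl | hij
    · rfl
    · have h1 : (s - Finsupp.single j 1 : Fin n →₀ ℕ) i = s i := by
        rw [Finsupp.tsub_apply, Finsupp.single_apply, if_neg (Ne.symm hij), Nat.sub_zero]
      have h2 : (s - Finsupp.single i 1 : Fin n →₀ ℕ) j = s j := by
        rw [Finsupp.tsub_apply, Finsupp.single_apply, if_neg hij, Nat.sub_zero]
      simp only [pderiv_monomial, h1, h2, tsub_tsub]
      rw [add_comm (Finsupp.single j 1)]
      congr 1
      ring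
  | add p q hp hq => simp [map_add, hp, hq]

lemma deriv_eq_sum (d : Derivation k (MvPolynomial (Fin n) k) (MvPolynomial (Fin n) k))
    (f : MvPolynomial (Fin n) k) : d f = ∑ i, d (X i) * pderiv i f := by
  induction f using MvPolynomial.induction_on with
  | C a => simp
  | add p q hp hq => simp [map_add, hp, hq, mul_add, Finset.sum_add_distrib]
  | mul_X p j hp =>
    have h2 : ∑ i, d (X i) * (p * pderiv i (X j)) = d (X j) * p := by
      rw [Finset.sum_eq_single j]
      · simp
      · intro b _ hb
        rw [pderiv_X_of_ne (Ne.symm hb), mul_zero, mul_zero]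
      · simp
    symm
    calc ∑ i, d (X i) * pderiv i (p * X j)
        = ∑ i, (d (X i) * pderiv i p * X j + d (X i) * (p * pderiv i (X j))) := by
          apply Finset.sum_congr rfl; intro i _
          rw [pderiv_mul]; ring
      _ = (∑ i, d (X i) * pderiv i p * X j) + ∑ i, d (X i) * (p * pderiv i (X j)) := by
          rw [Finset.sum_add_distrib]
      _ = (∑ i, d (X i) * pderiv i p) * X j + d (X j) * p := by
          rw [h2, Finset.sum_mul]
      _ = p • d (X j) + (X j) • d p := by
          rw [← hp, smul_eq_mul, smul_eq_mul]; ring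
      _ = d (p * X j) := (d.leibniz p (X j)).symm

lemma chain (φ : MvPolynomial (Fin n) k →ₐ[k] MvPolynomial (Fin n) k)
    (f : MvPolynomial (Fin n) k) (l : Fin n) :
    pderiv l (φ f) = ∑ i, φ (pderiv i f) * pderiv l (φ (X i)) := by
  induction f using MvPolynomial.induction_on with
  | C a => simp [map_zero]
  | add p q hp hq => simp [map_add, hp, hq, add_mul, Finset.sum_add_distrib]
  | mul_X p j hp =>
    have h2 : ∑ i, φ (p * pderiv i (X j)) * pderiv l (φ (X i)) = φ p * pderiv l (φ (X j)) := by
      rw [Finset.sum_eq_single j]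
      · simp
      · intro b _ hb
        rw [pderiv_X_of_ne (Ne.symm hb), mul_zero, map_zero, zero_mul]
      · simp
    symm
    calc ∑ i, φ (pderiv i (p * X j)) * pderiv l (φ (X i))
        = ∑ i, (φ (pderiv i p) * pderiv l (φ (X i)) * φ (X j)
            + φ (p * pderiv i (X j)) * pderiv l (φ (X i))) := by
          apply Finset.sum_congr rfl; intro i _
          rw [pderiv_mul, map_add, map_mul φ]; ring
      _ = (∑ i, φ (pderiv i p) * pderiv l (φ (X i)) * φ (X j))
            + ∑ i, φ (p * pderiv i (X j)) * pderiv l (φ (X i)) := by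
          rw [Finset.sum_add_distrib]
      _ = (∑ i, φ (pderiv i p) * pderiv l (φ (X i))) * φ (X j)
            + φ p * pderiv l (φ (X j)) := by
          rw [h2, Finset.sum_mul]
      _ = pderiv l (φ p) * φ (X j) + φ p * pderiv l (φ (X j)) := by rw [← hp]
      _ = pderiv l (φ p * φ (X j)) :=
          (pderiv_mul (i := l) (f := φ p) (g := φ (X j))).symm
      _ = pderiv l (φ (p * X j)) := by rw [map_mul φ]




lemma deriv_prod {A : Type*} [CommRing A] [Algebra k A] (D : Derivation k A A)
    {ι : Type*} [DecidableEq ι] (s : Finset ι) (g : ι → A) :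
    D (∏ i ∈ s, g i) = ∑ j ∈ s, (∏ i ∈ s.erase j, g i) * D (g j) := by
  induction s using Finset.induction_on with
  | empty => simp
  | @insert a s ha ih =>
    rw [Finset.prod_insert ha, D.leibniz, Finset.sum_insert ha, Finset.erase_insert ha]
    have hrest : ∀ j ∈ s, (∏ i ∈ (insert a s).erase j, g i) * D (g j)
        = g a * ((∏ i ∈ s.erase j, g i) * D (g j)) := by
      intro j hj
      have hja : j ≠ a := by rintro rfl; exact ha hj
      rw [Finset.erase_insert_of_ne (Ne.symm hja), Finset.prod_insert (fun h => ha (Finset.mem_of_mem_erase h))]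
      ring
    rw [Finset.sum_congr rfl hrest, ← Finset.mul_sum, ← ih]
    simp only [smul_eq_mul]
    ring

lemma deriv_det {A : Type*} [CommRing A] [Algebra k A] (D : Derivation k A A)
    {N : ℕ} (M : Matrix (Fin N) (Fin N) A) :
    D M.det = ∑ j, ∑ i, M.adjugate j i * D (M i j) := by
  have key : D M.det = ∑ j, (M.updateCol j fun i => D (M i j)).det := by
    rw [Matrix.det_apply, map_sum]
    have hterm : ∀ σ : Equiv.Perm (Fin N),
        D (Equiv.Perm.sign σ • ∏ i, M (σ i) i)
          = ∑ j, Equiv.Perm.sign σ •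
              ((∏ i ∈ Finset.univ.erase j, M (σ i) i) * D (M (σ j) j)) := by
      intro σ
      rw [Units.smul_def, map_zsmul, deriv_prod, Finset.smul_sum]
      simp only [Units.smul_def]
    rw [Finset.sum_congr rfl fun σ _ => hterm σ, Finset.sum_comm]
    apply Finset.sum_congr rfl
    intro j _
    rw [Matrix.det_apply]
    apply Finset.sum_congr rfl
    intro σ _
    congr 1
    have : ∀ i : Fin N, (M.updateCol j fun i => D (M i j)) (σ i) i
        = if i = j then D (M (σ i) j) else M (σ i) i := by
      intro i
      rw [Matrix.updateCol_apply]
    rw [Finset.prod_congr rfl (fun i _ => this i), ← Finset.mul_prod_erase _ _ (Finset.mem_univ j)]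
    rw [if_pos rfl, Finset.prod_congr rfl (fun i hi => if_neg (Finset.ne_of_mem_erase hi))]
    ring
  rw [key]
  apply Finset.sum_congr rfl
  intro j _
  rw [← Matrix.cramer_apply, Matrix.cramer_eq_adjugate_mulVec]
  simp [Matrix.mulVec, dotProduct]

lemma isUnit_eq_C : ∀ {N : ℕ} (p : MvPolynomial (Fin N) k), IsUnit p → ∃ c : k, p = C c := by
  intro N
  induction N with
  | zero =>
    intro p _
    exact ⟨p.coeff 0, p.eq_C_of_isEmpty⟩
  | succ N ih =>
    intro p hp
    have hq : IsUnit (MvPolynomial.finSuccEquiv k N p) := hp.map (MvPolynomial.finSuccEquiv k N)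
    obtain ⟨r, hr, hCr⟩ := Polynomial.isUnit_iff.mp hq
    obtain ⟨c, rfl⟩ := ih r hr
    refine ⟨c, ?_⟩
    have h2 : (MvPolynomial.finSuccEquiv k N).symm (Polynomial.C (MvPolynomial.C c))
        = MvPolynomial.C c :=
      RingHom.congr_fun (MvPolynomial.finSuccEquiv_comp_C_eq_C (R := k) N) c
    calc p = (MvPolynomial.finSuccEquiv k N).symm (MvPolynomial.finSuccEquiv k N p) :=
          ((MvPolynomial.finSuccEquiv k N).symm_apply_apply p).symm
      _ = C c := by rw [← hCr]; exact h2

lemma X_dvd_sub_ev (i : Fin n) (p : MvPolynomial (Fin n) k) :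
    (X i : MvPolynomial (Fin n) k) ∣ p - aeval (Function.update X i 0) p := by
  induction p using MvPolynomial.induction_on with
  | C a => simp
  | add p q hp hq =>
    have := dvd_add hp hq
    rw [map_add]
    convert this using 1
    ring
  | mul_X p j hp =>
    rw [map_mul, aeval_X]
    rcases eq_or_ne j i with rfl | hj
    · rw [Function.update_self, mul_zero, sub_zero]
      exact Dvd.intro_left p rfl
    · rw [Function.update_of_ne hj]
      have : p * X j - aeval (Function.update X i 0) p * X j
          = (p - aeval (Function.update X i 0) p) * X j := by ring
      rw [this]
      exact hp.mul_right _

lemma X_dvd_of_ev_zero (i : Fin n) (p : MvPolynomial (Fin n) k)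
    (h : (aeval (Function.update X i 0) p : MvPolynomial (Fin n) k) = 0) :
    (X i : MvPolynomial (Fin n) k) ∣ p := by
  have := X_dvd_sub_ev i p
  rwa [h, sub_zero] at this


end Stmt12Aux

open Stmt12Aux

/-- `n ≥ 3`, `R_n = k[x_1,…,x_n]`, `d_n` as in the paper
(`m ≥ 2`, `α ≥ 1`).  Any `k`-algebra automorphism `ρ` of `R_n` commuting
with `d_n` fixes `x_1` and `x_2`. -/
theorem stmt12 (k : Type*) [Field k] [CharZero k] (n m α : ℕ) (hn : 3 ≤ n)
    (hm : 2 ≤ m) (hα : 1 ≤ α)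
    (d : Derivation k (MvPolynomial (Fin n) k) (MvPolynomial (Fin n) k))
    (hd1 : d (X (⟨0, by omega⟩ : Fin n)) =
      1 - X (⟨0, by omega⟩ : Fin n) * (X (⟨1, by omega⟩ : Fin n)) ^ α)
    (hd2 : d (X (⟨1, by omega⟩ : Fin n)) = (X (⟨0, by omega⟩ : Fin n)) ^ m)
    (hdi : ∀ i : Fin n, 2 ≤ i.1 → d (X i) = X (⟨i.1 - 1, by omega⟩ : Fin n))
    (ρ : MvPolynomial (Fin n) k ≃ₐ[k] MvPolynomial (Fin n) k)
    (hcomm : ∀ r : MvPolynomial (Fin n) k, ρ (d r) = d (ρ r)) :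
    ρ (X (⟨0, by omega⟩ : Fin n)) = X (⟨0, by omega⟩ : Fin n) ∧
    ρ (X (⟨1, by omega⟩ : Fin n)) = X (⟨1, by omega⟩ : Fin n) := by
  classical
  set i0 : Fin n := ⟨0, by omega⟩ with hi0def
  set i1 : Fin n := ⟨1, by omega⟩ with hi1def
  have hne01 : i0 ≠ i1 := by
    intro h; rw [hi0def, hi1def, Fin.mk.injEq] at h; omega
  have hne10 : i1 ≠ i0 := Ne.symm hne01
  -- Step 1: the divergence of d is -X i1 ^ α
  have hdiv : (∑ j, pderiv j (d (X j)) : MvPolynomial (Fin n) k) = - X i1 ^ α := by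
    have hterm : ∀ j : Fin n, pderiv j (d (X j))
        = if j = i0 then - X i1 ^ α else 0 := by
      intro j
      by_cases h0 : j = i0
      · subst h0
        rw [if_pos rfl, hd1, map_sub, pderiv_one, pderiv_mul, pderiv_X_self, pderiv_pow,
          pderiv_X_of_ne hne10]
        ring
      by_cases h1 : j = i1
      · subst h1
        rw [if_neg h0, hd2, pderiv_pow, pderiv_X_of_ne hne01, mul_zero]
      · have e0 : j.1 ≠ 0 := by
          intro h; exact h0 (by rw [hi0def]; exact Fin.val_injective (by simp [h]))
        have e1 : j.1 ≠ 1 := by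
          intro h; exact h1 (by rw [hi1def]; exact Fin.val_injective (by simp [h]))
        have h2 : 2 ≤ j.1 := by omega
        rw [if_neg h0, hdi j h2]
        exact pderiv_X_of_ne (Fin.ne_of_val_ne (by simp; omega))
    rw [Finset.sum_congr rfl fun j _ => hterm j, Finset.sum_ite_eq' Finset.univ i0
      (fun _ => - X i1 ^ α), if_pos (Finset.mem_univ i0)]
  -- Step 2: Jacobian matrix
  set J : Matrix (Fin n) (Fin n) (MvPolynomial (Fin n) k) :=
    Matrix.of (fun l i => pderiv l (ρ (X i))) with hJdef
  have hJap : ∀ l i, J l i = pderiv l (ρ (X i)) := fun l i => by rw [hJdef]; rfl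
  have hchainρ : ∀ (q : MvPolynomial (Fin n) k) (l : Fin n),
      pderiv l (ρ q) = ∑ i, ρ (pderiv i q) * J l i := by
    intro q l
    have := chain (ρ : MvPolynomial (Fin n) k →ₐ[k] MvPolynomial (Fin n) k) q l
    simpa [hJap] using this
  have hJB : J * Matrix.of (fun i j => ρ (pderiv i (ρ.symm (X j)))) = 1 := by
    ext l j
    rw [Matrix.mul_apply]
    have h1 := hchainρ (ρ.symm (X j)) l
    rw [AlgEquiv.apply_symm_apply] at h1
    rw [show (∑ i, J l i * Matrix.of (fun i j => ρ (pderiv i (ρ.symm (X j)))) i j)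
        = ∑ i, ρ (pderiv i (ρ.symm (X j))) * J l i from
      Finset.sum_congr rfl fun i _ => mul_comm _ _]
    rw [← h1]
    rcases eq_or_ne l j with rfl | hlj
    · rw [pderiv_X_self, Matrix.one_apply_eq]
    · rw [pderiv_X_of_ne (Ne.symm hlj), Matrix.one_apply_ne hlj]
  have hdetu : IsUnit J.det := by
    have h2 := congrArg Matrix.det hJB
    rw [Matrix.det_mul, Matrix.det_one] at h2
    exact IsUnit.of_mul_eq_one _ h2
  obtain ⟨c0, hc0⟩ := isUnit_eq_C J.det hdetu
  have hc0ne : (C c0 : MvPolynomial (Fin n) k) ≠ 0 := hc0 ▸ hdetu.ne_zero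
  have hpdet : ∀ i : Fin n, pderiv i J.det = 0 := by
    intro i; rw [hc0]; exact pderiv_C
  have hJc : ∀ l i j : Fin n, pderiv l (J i j) = pderiv i (J l j) := by
    intro l i j
    rw [hJap, hJap]
    exact pderiv_comm' l i (ρ (X j))
  have hstar : ∀ j, ρ (d (X j)) = ∑ i, d (X i) * J i j := by
    intro j
    rw [hcomm (X j), deriv_eq_sum d (ρ (X j))]
    exact Finset.sum_congr rfl fun i _ => by rw [hJap]
  have hdiff : ∀ l j : Fin n, (∑ i, ρ (pderiv i (d (X j))) * J l i)
      = ∑ i, (pderiv l (d (X i)) * J i j + d (X i) * pderiv l (J i j)) := by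
    intro l j
    rw [← hchainρ (d (X j)) l, hstar j, map_sum]
    exact Finset.sum_congr rfl fun i _ => pderiv_mul
  have hAJ : ∀ jj i : Fin n, (∑ l, J l i * J.adjugate jj l)
      = if jj = i then J.det else 0 := by
    intro jj i
    have h2 : (J.adjugate * J) jj i
        = (J.det • (1 : Matrix (Fin n) (Fin n) (MvPolynomial (Fin n) k))) jj i := by
      rw [Matrix.adjugate_mul]
    rw [Matrix.mul_apply, Matrix.smul_apply, Matrix.one_apply, smul_ite, smul_eq_mul,
      mul_one, smul_zero] at h2
    rw [show (∑ l, J l i * J.adjugate jj l) = ∑ l, J.adjugate jj l * J l i from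
      Finset.sum_congr rfl fun l _ => mul_comm _ _]
    exact h2
  have hJA : ∀ i l : Fin n, (∑ j, J i j * J.adjugate j l)
      = if i = l then J.det else 0 := by
    intro i l
    have h2 : (J * J.adjugate) i l
        = (J.det • (1 : Matrix (Fin n) (Fin n) (MvPolynomial (Fin n) k))) i l := by
      rw [Matrix.mul_adjugate]
    rw [Matrix.mul_apply, Matrix.smul_apply, Matrix.one_apply, smul_ite, smul_eq_mul,
      mul_one, smul_zero] at h2
    exact h2
  -- Step 3: the three collapsed sums
  have hL : (∑ j, ∑ l, (∑ i, ρ (pderiv i (d (X j))) * J l i) * J.adjugate j l)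
      = J.det * ρ (∑ i, pderiv i (d (X i))) := by
    calc ∑ j, ∑ l, (∑ i, ρ (pderiv i (d (X j))) * J l i) * J.adjugate j l
        = ∑ j, ∑ i, ρ (pderiv i (d (X j))) * (∑ l, J l i * J.adjugate j l) := by
          refine Finset.sum_congr rfl fun j _ => ?_
          calc ∑ l, (∑ i, ρ (pderiv i (d (X j))) * J l i) * J.adjugate j l
              = ∑ l, ∑ i, ρ (pderiv i (d (X j))) * (J l i * J.adjugate j l) := by
                refine Finset.sum_congr rfl fun l _ => ?_
                rw [Finset.sum_mul]
                exact Finset.sum_congr rfl fun i _ => by ring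
            _ = ∑ i, ∑ l, ρ (pderiv i (d (X j))) * (J l i * J.adjugate j l) :=
                Finset.sum_comm
            _ = ∑ i, ρ (pderiv i (d (X j))) * (∑ l, J l i * J.adjugate j l) := by
                refine Finset.sum_congr rfl fun i _ => ?_
                rw [Finset.mul_sum]
      _ = ∑ j, ρ (pderiv j (d (X j))) * J.det := by
          refine Finset.sum_congr rfl fun j _ => ?_
          rw [Finset.sum_eq_single j]
          · rw [hAJ j j, if_pos rfl]
          · intro i _ hij
            rw [hAJ j i, if_neg fun h => hij h.symm, mul_zero]
          · intro h; exact absurd (Finset.mem_univ j) h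
      _ = J.det * ρ (∑ i, pderiv i (d (X i))) := by
          rw [map_sum, Finset.mul_sum]
          exact Finset.sum_congr rfl fun j _ => by ring
  have hR1 : (∑ j, ∑ l, (∑ i, pderiv l (d (X i)) * J i j) * J.adjugate j l)
      = J.det * (∑ i, pderiv i (d (X i))) := by
    calc ∑ j, ∑ l, (∑ i, pderiv l (d (X i)) * J i j) * J.adjugate j l
        = ∑ j, ∑ l, ∑ i, pderiv l (d (X i)) * (J i j * J.adjugate j l) := by
          refine Finset.sum_congr rfl fun j _ => Finset.sum_congr rfl fun l _ => ?_
          rw [Finset.sum_mul]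
          exact Finset.sum_congr rfl fun i _ => by ring
      _ = ∑ l, ∑ j, ∑ i, pderiv l (d (X i)) * (J i j * J.adjugate j l) := Finset.sum_comm
      _ = ∑ l, ∑ i, ∑ j, pderiv l (d (X i)) * (J i j * J.adjugate j l) := by
          exact Finset.sum_congr rfl fun l _ => Finset.sum_comm
      _ = ∑ l, ∑ i, pderiv l (d (X i)) * (∑ j, J i j * J.adjugate j l) := by
          refine Finset.sum_congr rfl fun l _ => Finset.sum_congr rfl fun i _ => ?_
          rw [Finset.mul_sum]
      _ = ∑ l, ∑ i, pderiv l (d (X i)) * (if i = l then J.det else 0) := by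
          refine Finset.sum_congr rfl fun l _ => Finset.sum_congr rfl fun i _ => ?_
          rw [hJA i l]
      _ = ∑ l, pderiv l (d (X l)) * J.det := by
          refine Finset.sum_congr rfl fun l _ => ?_
          rw [Finset.sum_eq_single l]
          · rw [if_pos rfl]
          · intro i _ hil
            rw [if_neg hil, mul_zero]
          · intro h; exact absurd (Finset.mem_univ l) h
      _ = J.det * (∑ i, pderiv i (d (X i))) := by
          rw [Finset.mul_sum]
          exact Finset.sum_congr rfl fun l _ => by ring
  have hR2 : (∑ j, ∑ l, (∑ i, d (X i) * pderiv l (J i j)) * J.adjugate j l) = 0 := by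
    calc ∑ j, ∑ l, (∑ i, d (X i) * pderiv l (J i j)) * J.adjugate j l
        = ∑ j, ∑ l, ∑ i, d (X i) * (J.adjugate j l * pderiv i (J l j)) := by
          refine Finset.sum_congr rfl fun j _ => Finset.sum_congr rfl fun l _ => ?_
          rw [Finset.sum_mul]
          refine Finset.sum_congr rfl fun i _ => ?_
          rw [hJc l i j]
          ring
      _ = ∑ l, ∑ j, ∑ i, d (X i) * (J.adjugate j l * pderiv i (J l j)) := Finset.sum_comm
      _ = ∑ l, ∑ i, ∑ j, d (X i) * (J.adjugate j l * pderiv i (J l j)) := by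
          exact Finset.sum_congr rfl fun l _ => Finset.sum_comm
      _ = ∑ i, ∑ l, ∑ j, d (X i) * (J.adjugate j l * pderiv i (J l j)) := Finset.sum_comm
      _ = ∑ i, d (X i) * (∑ l, ∑ j, J.adjugate j l * pderiv i (J l j)) := by
          refine Finset.sum_congr rfl fun i _ => ?_
          rw [Finset.mul_sum]
          refine Finset.sum_congr rfl fun l _ => ?_
          rw [Finset.mul_sum]
      _ = ∑ i, d (X i) * (∑ j, ∑ l, J.adjugate j l * pderiv i (J l j)) := by
          refine Finset.sum_congr rfl fun i _ => ?_
          rw [Finset.sum_comm]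
      _ = ∑ i, d (X i) * pderiv i J.det := by
          refine Finset.sum_congr rfl fun i _ => ?_
          rw [deriv_det (pderiv i) J]
      _ = 0 := by
          refine Finset.sum_eq_zero fun i _ => ?_
          rw [hpdet i, mul_zero]
  have hsummed : (∑ j, ∑ l, (∑ i, ρ (pderiv i (d (X j))) * J l i) * J.adjugate j l)
      = (∑ j, ∑ l, (∑ i, pderiv l (d (X i)) * J i j) * J.adjugate j l)
        + ∑ j, ∑ l, (∑ i, d (X i) * pderiv l (J i j)) * J.adjugate j l := by
    rw [← Finset.sum_add_distrib]
    refine Finset.sum_congr rfl fun j _ => ?_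
    rw [← Finset.sum_add_distrib]
    refine Finset.sum_congr rfl fun l _ => ?_
    rw [hdiff l j, Finset.sum_add_distrib, add_mul]
  have hEsum : J.det * ρ (∑ i, pderiv i (d (X i)))
      = J.det * (∑ i, pderiv i (d (X i))) := by
    rw [← hL, hsummed, hR1, hR2, add_zero]
  have hrs : ρ (∑ i, pderiv i (d (X i))) = ∑ i, pderiv i (d (X i)) := by
    rw [hc0] at hEsum
    exact mul_left_cancel₀ hc0ne hEsum
  rw [hdiv] at hrs
  have hρs : ρ (X i1) ^ α = X i1 ^ α := by
    rw [map_neg, map_pow] at hrs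
    exact neg_inj.mp hrs
  -- Step 4: endgame
  have hXne : (X i1 : MvPolynomial (Fin n) k) ≠ 0 := X_ne_zero i1
  have hb1 : (X i1 : MvPolynomial (Fin n) k) ∣ ρ (X i1) := by
    apply X_dvd_of_ev_zero
    have h1 : (aeval (Function.update X i1 0) (ρ (X i1)) : MvPolynomial (Fin n) k) ^ α = 0 := by
      rw [← map_pow, hρs, map_pow, aeval_X, Function.update_self, zero_pow (by omega : α ≠ 0)]
    exact (pow_eq_zero_iff (by omega : α ≠ 0)).mp h1
  obtain ⟨b1, hb⟩ := hb1
  have hb1pow : b1 ^ α = 1 := by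
    have h1 : X i1 ^ α * b1 ^ α = X i1 ^ α * 1 := by
      rw [mul_one, ← mul_pow, ← hb, hρs]
    exact mul_left_cancel₀ (pow_ne_zero _ hXne) h1
  obtain ⟨β, hβ⟩ : ∃ β, α = β + 1 := ⟨α - 1, by omega⟩
  have hub1 : IsUnit b1 :=
    IsUnit.of_mul_eq_one (b1 ^ β) (by rw [← pow_succ', ← hβ, hb1pow])
  obtain ⟨c, hc⟩ := isUnit_eq_C b1 hub1
  have hcα : c ^ α = 1 := by
    have h1 : (C (c ^ α) : MvPolynomial (Fin n) k) = C 1 := by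
      rw [map_pow, map_one, ← hc, hb1pow]
    exact C_injective _ _ h1
  have hcne : c ≠ 0 := by
    intro h0
    rw [h0, zero_pow (by omega : α ≠ 0)] at hcα
    exact one_ne_zero hcα.symm
  -- ρ (X i0) ^ m = C c * X i0 ^ m
  have ham : ρ (X i0) ^ m = C c * X i0 ^ m := by
    have h1 := hcomm (X i1)
    rw [hd2, map_pow, hb, hc] at h1
    have h2 : d (X i1 * C c) = C c * X i0 ^ m := by
      rw [d.leibniz, derivation_C, smul_zero, zero_add, smul_eq_mul, hd2]
    rw [h1, h2]
  have hadv : (X i0 : MvPolynomial (Fin n) k) ∣ ρ (X i0) := by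
    apply X_dvd_of_ev_zero
    have h1 : (aeval (Function.update X i0 0) (ρ (X i0)) : MvPolynomial (Fin n) k) ^ m = 0 := by
      rw [← map_pow, ham, map_mul, map_pow, aeval_X, Function.update_self,
        zero_pow (by omega : m ≠ 0), mul_zero]
    exact (pow_eq_zero_iff (by omega : m ≠ 0)).mp h1
  obtain ⟨a1, ha⟩ := hadv
  have ha1m : a1 ^ m = C c := by
    have h1 : X i0 ^ m * a1 ^ m = X i0 ^ m * C c := by
      rw [← mul_pow, ← ha, ham]; ring
    exact mul_left_cancel₀ (pow_ne_zero _ (X_ne_zero i0)) h1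
  have hua1 : IsUnit a1 := by
    have h1 : IsUnit (a1 ^ m) := by
      rw [ha1m]
      exact (isUnit_iff_ne_zero.mpr hcne).map (C : k →+* MvPolynomial (Fin n) k)
    exact (isUnit_pow_iff (by omega : m ≠ 0)).mp h1
  obtain ⟨e, he⟩ := isUnit_eq_C a1 hua1
  have hem : e ^ m = c := by
    apply C_injective (Fin n) k
    rw [map_pow, ← he, ha1m]
  have hfin := hcomm (X i0)
  rw [hd1, map_sub, map_one, map_mul, map_pow, ha, he, hb, hc] at hfin
  have hr : d (X i0 * C e) = C e - C e * (X i0 * X i1 ^ α) := by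
    rw [d.leibniz, derivation_C, smul_zero, zero_add, smul_eq_mul, hd1]
    ring
  rw [hr] at hfin
  have hx : (X i0 * C e) * (X i1 * C c) ^ α = C e * (X i0 * X i1 ^ α) := by
    rw [mul_pow, ← map_pow, hcα, map_one]; ring
  rw [hx] at hfin
  have he1 : (C e : MvPolynomial (Fin n) k) = 1 :=
    (sub_left_inj.mp hfin).symm
  have he' : e = 1 := by
    apply C_injective (Fin n) k
    rw [he1, map_one]
  constructor
  · rw [ha, he, he', map_one, mul_one]
  · have hc1 : c = 1 := by rw [← hem, he', one_pow]
    rw [hb, hc, hc1, map_one, mul_one]
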